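/- arXiv:2106.14848 — 3 statements merged into one kernel-verified Lean document; each statement's English description precedes it below -/
import Mathlib

section
/- Let G be a finite simple connected graph with at least 2 vertices and let e be an edge of G such that the graph G − e obtained from G by deleting e is still connected. Then γ_L^1(G) − 2 ≤ γ_L^1(G − e) ≤ γ_L^1(G) + 2. -/
open SimpleGraph Finset

def IsKDomSet {V : Type*} (G : SimpleGraph V) (k : ℕ) (D : Finset V) : Prop :=
  ∀ u : V, u ∉ D → ∃ w ∈ D, G.dist u w ≤ k

def IsKResSet {V : Type*} (G : SimpleGraph V) (k : ℕ) (R : Finset V) : Prop :=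
  ∀ x y : V, x ≠ y → ∃ z ∈ R, min (G.dist x z) (k + 1) ≠ min (G.dist y z) (k + 1)

noncomputable def kdom {V : Type*} (G : SimpleGraph V) (k : ℕ) : ℕ :=
  sInf {m : ℕ | ∃ D : Finset V, IsKDomSet G k D ∧ D.card = m}

noncomputable def kdim {V : Type*} (G : SimpleGraph V) (k : ℕ) : ℕ :=
  sInf {m : ℕ | ∃ R : Finset V, IsKResSet G k R ∧ R.card = m}

noncomputable def kld {V : Type*} (G : SimpleGraph V) (k : ℕ) : ℕ :=
  sInf {m : ℕ | ∃ S : Finset V, IsKDomSet G k S ∧ IsKResSet G k S ∧ S.card = m}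

open Classical in
/-- truncated distance at k=1 is determined by equality and adjacency. -/
lemma min_dist_two {V : Type*} (H : SimpleGraph V) (hH : H.Connected) (x z : V) :
    min (H.dist x z) 2 = if x = z then 0 else if H.Adj x z then 1 else 2 := by
  split_ifs with h1 h2
  · subst h1; simp [SimpleGraph.dist_self]
  · rw [SimpleGraph.dist_eq_one_iff_adj.mpr h2]; simp
  · have h0 : H.dist x z ≠ 0 := fun h => h1 (hH.dist_eq_zero_iff.mp h)
    have hone : H.dist x z ≠ 1 := fun h => h2 (SimpleGraph.dist_eq_one_iff_adj.mp h)
    omega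

/-- univ is always a distance-1 LD set of a connected graph -/
lemma univ_ld {V : Type*} [Fintype V] (H : SimpleGraph V) (hH : H.Connected) :
    IsKDomSet H 1 Finset.univ ∧ IsKResSet H 1 Finset.univ := by
  classical
  constructor
  · intro u hu; exact absurd (Finset.mem_univ u) hu
  · intro x y hxy
    refine ⟨x, Finset.mem_univ x, ?_⟩
    show min (H.dist x x) 2 ≠ min (H.dist y x) 2
    rw [min_dist_two H hH, min_dist_two H hH, if_pos rfl, if_neg (Ne.symm hxy)]
    split_ifs <;> simp

lemma transfer {V : Type*} [Fintype V] [DecidableEq V] (H H' : SimpleGraph V)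
    (hH : H.Connected) (hH' : H'.Connected) (u v : V)
    (hadj : ∀ x z : V, x ≠ u → x ≠ v → (H.Adj x z ↔ H'.Adj x z))
    (S : Finset V) (hdom : IsKDomSet H 1 S) (hres : IsKResSet H 1 S) :
    IsKDomSet H' 1 (S ∪ {u, v}) ∧ IsKResSet H' 1 (S ∪ {u, v}) := by
  classical
  have hsame : ∀ x z : V, x ≠ u → x ≠ v →
      min (H.dist x z) 2 = min (H'.dist x z) 2 := by
    intro x z h1 h2
    rw [min_dist_two H hH, min_dist_two H' hH']
    by_cases hxz : x = z
    · simp [hxz]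
    · rw [if_neg hxz, if_neg hxz, hadj x z h1 h2]
  constructor
  · intro p hp
    simp only [Finset.mem_union, Finset.mem_insert, Finset.mem_singleton, not_or] at hp
    obtain ⟨hpS, hpu, hpv⟩ := hp
    obtain ⟨w, hwS, hw⟩ := hdom p hpS
    refine ⟨w, Finset.mem_union_left _ hwS, ?_⟩
    have hne : p ≠ w := fun h => hpS (h ▸ hwS)
    have h1 : H.dist p w = 1 := by
      have := (hH.dist_eq_zero_iff (u := p) (v := w)).not.mpr hne
      omega
    have : H'.Adj p w := (hadj p w hpu hpv).mp (SimpleGraph.dist_eq_one_iff_adj.mp h1)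
    exact le_of_eq (SimpleGraph.dist_eq_one_iff_adj.mpr this)
  · intro x y hxy
    by_cases hx : x ∈ S ∪ {u, v}
    · refine ⟨x, hx, ?_⟩
      show min (H'.dist x x) 2 ≠ min (H'.dist y x) 2
      rw [min_dist_two H' hH', min_dist_two H' hH', if_pos rfl, if_neg (Ne.symm hxy)]
      split_ifs <;> simp
    by_cases hy : y ∈ S ∪ {u, v}
    · refine ⟨y, hy, ?_⟩
      show min (H'.dist x y) 2 ≠ min (H'.dist y y) 2
      rw [min_dist_two H' hH', min_dist_two H' hH', if_pos rfl, if_neg hxy]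
      split_ifs <;> simp
    simp only [Finset.mem_union, Finset.mem_insert, Finset.mem_singleton, not_or] at hx hy
    obtain ⟨z, hzS, hz⟩ := hres x y hxy
    refine ⟨z, Finset.mem_union_left _ hzS, ?_⟩
    show min (H'.dist x z) 2 ≠ min (H'.dist y z) 2
    rw [← hsame x z hx.2.1 hx.2.2, ← hsame y z hy.2.1 hy.2.2]
    exact hz

/-- If `G` is a finite simple connected graph with at least 2 vertices and `e` an edge of
`G` with `G - e` connected, then `γ_L^1(G) - 2 ≤ γ_L^1(G - e) ≤ γ_L^1(G) + 2`. -/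
theorem stmt_17 {V : Type*} [Fintype V] (G : SimpleGraph V) (hG : G.Connected)
    (hn : 2 ≤ Fintype.card V) (e : Sym2 V) (he : e ∈ G.edgeSet)
    (hc : (G.deleteEdges {e}).Connected) :
    kld G 1 ≤ kld (G.deleteEdges {e}) 1 + 2 ∧
      kld (G.deleteEdges {e}) 1 ≤ kld G 1 + 2 := by
  classical
  induction e using Sym2.ind with
  | _ u v =>
  set G' := G.deleteEdges {s(u, v)} with hG'
  have hadj : ∀ x z : V, x ≠ u → x ≠ v → (G.Adj x z ↔ G'.Adj x z) := by
    intro x z h1 h2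
    rw [hG', SimpleGraph.deleteEdges_adj]
    simp only [Set.mem_singleton_iff]
    constructor
    · intro h; refine ⟨h, ?_⟩
      intro hxz
      rcases Sym2.eq_iff.mp hxz with ⟨rfl, rfl⟩ | ⟨rfl, rfl⟩
      · exact h1 rfl
      · exact h2 rfl
    · exact fun h => h.1
  have key : ∀ (H H' : SimpleGraph V), H.Connected → H'.Connected →
      (∀ x z : V, x ≠ u → x ≠ v → (H.Adj x z ↔ H'.Adj x z)) →
      kld H' 1 ≤ kld H 1 + 2 := by
    intro H H' hH hH' hadj'
    have hne : {m : ℕ | ∃ S : Finset V, IsKDomSet H 1 S ∧ IsKResSet H 1 S ∧ S.card = m}.Nonempty := by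
      obtain ⟨h1, h2⟩ := univ_ld H hH
      exact ⟨_, Finset.univ, h1, h2, rfl⟩
    obtain ⟨S, hdom, hres, hcard⟩ := Nat.sInf_mem hne
    obtain ⟨hdom', hres'⟩ := transfer H H' hH hH' u v hadj' S hdom hres
    have h1 : kld H' 1 ≤ (S ∪ {u, v}).card :=
      Nat.sInf_le ⟨S ∪ {u, v}, hdom', hres', rfl⟩
    have h2 : (S ∪ {u, v}).card ≤ S.card + 2 := by
      calc (S ∪ {u, v}).card ≤ S.card + ({u, v} : Finset V).card := Finset.card_union_le _ _
        _ ≤ S.card + 2 := by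
            have h := Finset.card_insert_le u ({v} : Finset V)
            simp only [Finset.card_singleton] at h
            omega
    have hk : kld H 1 = S.card := by rw [kld]; exact hcard.symm
    omega
  exact ⟨key G' G hc hG (fun x z h1 h2 => (hadj x z h1 h2).symm), key G G' hG hc hadj⟩
end

section
/- Let G be a finite simple connected graph with at least 2 vertices and let e be an edge of G such that the graph G − e obtained from G by deleting e is still connected. Then γ_L^2(G − e) ≤ γ_L^2(G) + 2, and for every integer k ≥ 3, γ_L^k(G − e) ≤ γ_L^k(G) + 3. -/
open SimpleGraph Finset

namespace Stmt18Aux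

variable {V : Type*} {G : SimpleGraph V} {a b : V}

/-- Distances only grow under edge deletion (given the deleted graph is connected). -/
lemma dist_le_dist_del (hc : (G.deleteEdges ({s(a, b)} : Set (Sym2 V))).Connected) (u v : V) :
    G.dist u v ≤ (G.deleteEdges ({s(a, b)} : Set (Sym2 V))).dist u v := by
  obtain ⟨p, hp⟩ := hc.exists_walk_length_eq_dist u v
  calc G.dist u v ≤ (p.mapLe (G.deleteEdges_le _)).length := SimpleGraph.dist_le _
    _ = p.length := by simp [Walk.mapLe]
    _ = _ := hp

/-- Key inequality: along any walk in `G`, the min of the three routes in `G - ab`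
is at most the walk length. -/
lemma min3_le_walk (hc : (G.deleteEdges ({s(a, b)} : Set (Sym2 V))).Connected)
    {u v : V} (p : G.Walk u v) :
    letI G' := G.deleteEdges ({s(a, b)} : Set (Sym2 V))
    min (G'.dist u v)
      (min (G'.dist u a + 1 + G'.dist b v) (G'.dist u b + 1 + G'.dist a v)) ≤ p.length := by
  set G' := G.deleteEdges ({s(a, b)} : Set (Sym2 V)) with hG'
  induction p with
  | nil => simp [SimpleGraph.dist_self]
  | @cons u w v h q ih =>
    rw [Walk.length_cons]
    by_cases he : s(u, w) = s(a, b)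
    · rw [Sym2.eq_iff] at he
      have d1 : G'.dist a a = 0 := SimpleGraph.dist_self
      have d2 : G'.dist b b = 0 := SimpleGraph.dist_self
      rcases he with ⟨rfl, rfl⟩ | ⟨rfl, rfl⟩ <;> omega
    · have hadj : G'.Adj u w := by
        rw [hG', SimpleGraph.deleteEdges_adj]
        exact ⟨h, by simpa using he⟩
      have h1 : G'.dist u w = 1 := SimpleGraph.dist_eq_one_iff_adj.mpr hadj
      have t1 : G'.dist u v ≤ G'.dist u w + G'.dist w v := hc.dist_triangle
      have t2 : G'.dist u a ≤ G'.dist u w + G'.dist w a := hc.dist_triangle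
      have t3 : G'.dist u b ≤ G'.dist u w + G'.dist w b := hc.dist_triangle
      omega

/-- The distance formula after deleting the edge `ab`. -/
lemma dist_del_eq (hG : G.Connected) (hab : G.Adj a b)
    (hc : (G.deleteEdges ({s(a, b)} : Set (Sym2 V))).Connected) (u v : V) :
    letI G' := G.deleteEdges ({s(a, b)} : Set (Sym2 V))
    G.dist u v = min (G'.dist u v)
      (min (G'.dist u a + 1 + G'.dist b v) (G'.dist u b + 1 + G'.dist a v)) := by
  set G' := G.deleteEdges ({s(a, b)} : Set (Sym2 V)) with hG'
  have hab1 : G.dist a b = 1 := SimpleGraph.dist_eq_one_iff_adj.mpr hab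
  have hba1 : G.dist b a = 1 := SimpleGraph.dist_eq_one_iff_adj.mpr hab.symm
  have l1 : G.dist u v ≤ G'.dist u v := dist_le_dist_del hc u v
  have l2a : G.dist u a ≤ G'.dist u a := dist_le_dist_del hc u a
  have l2b : G.dist u b ≤ G'.dist u b := dist_le_dist_del hc u b
  have l3a : G.dist a v ≤ G'.dist a v := dist_le_dist_del hc a v
  have l3b : G.dist b v ≤ G'.dist b v := dist_le_dist_del hc b v
  have t1 : G.dist u v ≤ G.dist u a + G.dist a v := hG.dist_triangle
  have t1' : G.dist a v ≤ G.dist a b + G.dist b v := hG.dist_triangle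
  have t2 : G.dist u v ≤ G.dist u b + G.dist b v := hG.dist_triangle
  have t2' : G.dist b v ≤ G.dist b a + G.dist a v := hG.dist_triangle
  obtain ⟨p, hp⟩ := hG.exists_walk_length_eq_dist u v
  have hmin := min3_le_walk hc p
  simp only [← hG'] at hmin
  rw [hp] at hmin
  omega

end Stmt18Aux

/-- If `G` is a finite simple connected graph with at least 2 vertices and `e` an edge of
`G` with `G - e` connected, then `γ_L^2(G - e) ≤ γ_L^2(G) + 2`, and for every `k ≥ 3`,
`γ_L^k(G - e) ≤ γ_L^k(G) + 3`. -/
theorem stmt_18 {V : Type*} [Fintype V] (G : SimpleGraph V) (hG : G.Connected)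
    (hn : 2 ≤ Fintype.card V) (e : Sym2 V) (he : e ∈ G.edgeSet)
    (hc : (G.deleteEdges {e}).Connected) :
    kld (G.deleteEdges {e}) 2 ≤ kld G 2 + 2 ∧
      ∀ k : ℕ, 3 ≤ k → kld (G.deleteEdges {e}) k ≤ kld G k + 3 := by
  classical
  have key : ∀ k : ℕ, kld (G.deleteEdges {e}) k ≤ kld G k + 2 := by
    intro k
    revert he hc
    induction e using Sym2.ind with
    | _ a b =>
      intro he hc
      have hab : G.Adj a b := he
      set G' := G.deleteEdges ({s(a, b)} : Set (Sym2 V)) with hG'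
      have eqd : ∀ u v : V, G.dist u v = min (G'.dist u v)
          (min (G'.dist u a + 1 + G'.dist b v) (G'.dist u b + 1 + G'.dist a v)) :=
        Stmt18Aux.dist_del_eq hG hab hc
      -- the defining set for `kld G k` is nonempty
      have hne : {m : ℕ | ∃ S : Finset V, IsKDomSet G k S ∧ IsKResSet G k S ∧ S.card = m}.Nonempty := by
        refine ⟨(univ : Finset V).card, univ, ?_, ?_, rfl⟩
        · intro u hu; simp at hu
        · intro x y hxy
          refine ⟨x, mem_univ x, ?_⟩
          have h0 : G.dist x x = 0 := SimpleGraph.dist_self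
          have h1 : 0 < G.dist y x := hG.pos_dist_of_ne (Ne.symm hxy)
          omega
      obtain ⟨S, hdom, hres, hcard⟩ := Nat.sInf_mem hne
      have hsub : ∀ w ∈ S, w ∈ S ∪ {a, b} := fun w hw => mem_union_left _ hw
      have haT : a ∈ S ∪ {a, b} := by simp
      have hbT : b ∈ S ∪ {a, b} := by simp
      have hdom' : IsKDomSet G' k (S ∪ {a, b}) := by
        intro u hu
        have huS : u ∉ S := fun h => hu (hsub u h)
        obtain ⟨w, hwS, hw⟩ := hdom u huS
        have heq := eqd u w
        by_cases h1 : G'.dist u w ≤ k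
        · exact ⟨w, hsub w hwS, h1⟩
        by_cases h2 : G'.dist u a ≤ k
        · exact ⟨a, haT, h2⟩
        · exact ⟨b, hbT, by omega⟩
      have hres' : IsKResSet G' k (S ∪ {a, b}) := by
        intro x y hxy
        by_cases ha : min (G'.dist x a) (k + 1) = min (G'.dist y a) (k + 1)
        · by_cases hb : min (G'.dist x b) (k + 1) = min (G'.dist y b) (k + 1)
          · obtain ⟨z, hzS, hz⟩ := hres x y hxy
            refine ⟨z, hsub z hzS, fun hcon => hz ?_⟩
            have e1 := eqd x z
            have e2 := eqd y z
            omega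
          · exact ⟨b, hbT, hb⟩
        · exact ⟨a, haT, ha⟩
      have hle : kld G' k ≤ (S ∪ {a, b}).card :=
        Nat.sInf_le ⟨S ∪ {a, b}, hdom', hres', rfl⟩
      have hcardle : (S ∪ {a, b}).card ≤ S.card + 2 := by
        calc (S ∪ {a, b}).card ≤ S.card + ({a, b} : Finset V).card := card_union_le _ _
          _ ≤ S.card + 2 := by
              have : ({a, b} : Finset V).card ≤ 2 := card_insert_le a {b} |>.trans (by simp)
              omega
      calc kld G' k ≤ S.card + 2 := hle.trans hcardle
        _ = kld G k + 2 := by rw [hcard]; rfl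
  exact ⟨key 2, fun k hk => (key k).trans (by omega)⟩
end

section
/- For every integer k ≥ 2 and every positive integer N, there exist a finite simple connected graph G and an edge e of G such that G − e is connected and γ_L^k(G) − γ_L^k(G − e) ≥ N. -/
open SimpleGraph Finset

namespace Stmt19

/-! ### General helper lemmas about graph distances and isomorphisms -/

variable {V W : Type*} {G : SimpleGraph V} {H : SimpleGraph W}

lemma dist_two {u v w : V} (hne : u ≠ v) (h : ¬ G.Adj u v)
    (h1 : G.Adj u w) (h2 : G.Adj w v) : G.dist u v = 2 := by
  have hle : G.dist u v ≤ 2 := by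
    simpa using SimpleGraph.dist_le
      (SimpleGraph.Walk.cons h1 (SimpleGraph.Walk.cons h2 SimpleGraph.Walk.nil))
  have h0 : G.dist u v ≠ 0 := by
    rw [SimpleGraph.dist_ne_zero_iff_ne_and_reachable]
    exact ⟨hne, ⟨SimpleGraph.Walk.cons h1 (SimpleGraph.Walk.cons h2 SimpleGraph.Walk.nil)⟩⟩
  have h1' : G.dist u v ≠ 1 := fun hh => h (SimpleGraph.dist_eq_one_iff_adj.mp hh)
  omega

lemma dist_three {u v : V} (hne : u ≠ v) (h : ¬ G.Adj u v)
    (hmid : ∀ w, ¬ (G.Adj u w ∧ G.Adj w v)) (p : G.Walk u v) (hp : p.length = 3) :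
    G.dist u v = 3 := by
  have hle : G.dist u v ≤ 3 := by simpa [hp] using SimpleGraph.dist_le p
  have h0 : G.dist u v ≠ 0 := by
    rw [SimpleGraph.dist_ne_zero_iff_ne_and_reachable]
    exact ⟨hne, ⟨p⟩⟩
  have h1' : G.dist u v ≠ 1 := fun hh => h (SimpleGraph.dist_eq_one_iff_adj.mp hh)
  have h2' : G.dist u v ≠ 2 := by
    intro hh
    have hr : G.Reachable u v := ⟨p⟩
    obtain ⟨q, hq⟩ := hr.exists_walk_length_eq_dist
    rw [hh] at hq
    cases q with
    | nil => simp at hq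
    | cons h1 q' =>
      cases q' with
      | nil => simp at hq
      | cons h2 q'' =>
        simp [SimpleGraph.Walk.length_cons] at hq
        have := SimpleGraph.Walk.Nil.eq hq
        subst this
        exact hmid _ ⟨h1, h2⟩
  omega

lemma iso_dist_le (ψ : G ≃g H) (u v : V) : H.dist (ψ u) (ψ v) ≤ G.dist u v := by
  by_cases hr : G.Reachable u v
  · obtain ⟨p, hp⟩ := hr.exists_walk_length_eq_dist
    calc H.dist (ψ u) (ψ v) ≤ (p.map ψ.toHom).length := SimpleGraph.dist_le _
      _ = p.length := SimpleGraph.Walk.length_map _ _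
      _ = G.dist u v := hp
  · have hr' : ¬ H.Reachable (ψ u) (ψ v) := by
      intro h
      obtain ⟨q⟩ := h
      exact hr ⟨(q.map ψ.symm.toHom).copy (by simp) (by simp)⟩
    simp [SimpleGraph.dist_eq_zero_of_not_reachable hr,
      SimpleGraph.dist_eq_zero_of_not_reachable hr']

lemma iso_dist_eq (ψ : G ≃g H) (u v : V) : H.dist (ψ u) (ψ v) = G.dist u v := by
  refine le_antisymm (iso_dist_le ψ u v) ?_
  have := iso_dist_le ψ.symm (ψ u) (ψ v)
  simpa using this

lemma iso_connected (ψ : G ≃g H) (h : G.Connected) : H.Connected := by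
  rw [SimpleGraph.connected_iff] at *
  obtain ⟨hp, hn⟩ := h
  refine ⟨fun u v => ?_, ⟨ψ hn.some⟩⟩
  obtain ⟨p⟩ := hp (ψ.symm u) (ψ.symm v)
  exact ⟨(p.map ψ.toHom).copy (by simp) (by simp)⟩

lemma univ_mem_kldSet [Fintype V] [DecidableEq V] (hconn : G.Connected) (k : ℕ) :
    IsKDomSet G k (Finset.univ : Finset V) ∧ IsKResSet G k (Finset.univ : Finset V) := by
  constructor
  · intro u hu; exact absurd (Finset.mem_univ u) hu
  · intro x y hxy
    refine ⟨x, Finset.mem_univ x, ?_⟩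
    have h0 : G.dist y x ≠ 0 := (hconn.pos_dist_of_ne hxy.symm).ne'
    rw [SimpleGraph.dist_self]
    omega

lemma kld_le_of_iso [DecidableEq W] (ψ : G ≃g H) (k : ℕ)
    (hne : {m : ℕ | ∃ S : Finset V, IsKDomSet G k S ∧ IsKResSet G k S ∧ S.card = m}.Nonempty) :
    kld H k ≤ kld G k := by
  obtain ⟨S, hdom, hres, hcard⟩ := Nat.sInf_mem hne
  apply Nat.sInf_le
  refine ⟨S.image ψ, ?_, ?_, ?_⟩
  · intro u hu
    have hu0 : ψ.symm u ∉ S := by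
      intro h
      exact hu (Finset.mem_image.mpr ⟨_, h, by simp⟩)
    obtain ⟨w, hw, hd⟩ := hdom (ψ.symm u) hu0
    refine ⟨ψ w, Finset.mem_image_of_mem _ hw, ?_⟩
    have h1 : H.dist (ψ (ψ.symm u)) (ψ w) = G.dist (ψ.symm u) w := iso_dist_eq ψ _ _
    simp only [RelIso.apply_symm_apply] at h1
    rw [h1]; exact hd
  · intro x y hxy
    have hxy0 : ψ.symm x ≠ ψ.symm y := fun h => hxy (by simpa using congrArg ψ h)
    obtain ⟨z, hz, hd⟩ := hres _ _ hxy0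
    refine ⟨ψ z, Finset.mem_image_of_mem _ hz, ?_⟩
    have h1 : H.dist (ψ (ψ.symm x)) (ψ z) = G.dist (ψ.symm x) z := iso_dist_eq ψ _ _
    have h2 : H.dist (ψ (ψ.symm y)) (ψ z) = G.dist (ψ.symm y) z := iso_dist_eq ψ _ _
    simp only [RelIso.apply_symm_apply] at h1 h2
    rw [h1, h2]
    exact hd
  · rw [Finset.card_image_of_injective _ ψ.injective]; exact hcard

/-! ### The concrete construction -/

inductive Vtx (m r : ℕ) : Type
  | A | B | C
  | Bit (j : Fin r)
  | X (i : Fin m) | Y (i : Fin m) | T (i : Fin m) | S (i : Fin m)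
  deriving DecidableEq, Fintype

open Vtx

def E {m r : ℕ} : Vtx m r → Vtx m r → Prop
  | A, C => True
  | A, T _ => True
  | C, S _ => True
  | X i, T j => i = j
  | Y i, S j => i = j
  | Bit j, X i => (i : ℕ).testBit (j : ℕ) = true
  | Bit j, Y i => (i : ℕ).testBit (j : ℕ) = true
  | Bit j, T i => (i : ℕ).testBit (j : ℕ) = true
  | Bit j, S i => (i : ℕ).testBit (j : ℕ) = true
  | _, _ => False

def Gr (m r : ℕ) : SimpleGraph (Vtx m r) where
  Adj u v := u ≠ v ∧ (u = B ∨ v = B ∨ E u v ∨ E v u)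
  symm := by
    constructor
    intro u v ⟨h1, h2⟩
    exact ⟨h1.symm, by tauto⟩
  loopless := ⟨fun u h => h.1 rfl⟩

variable {m r : ℕ}

lemma adj_mk {u v : Vtx m r} (h1 : u ≠ v) (h2 : u = B ∨ v = B ∨ E u v ∨ E v u) :
    (Gr m r).Adj u v := ⟨h1, h2⟩

lemma adj_B {v : Vtx m r} (h : v ≠ B) : (Gr m r).Adj B v :=
  ⟨fun hh => h hh.symm, Or.inl rfl⟩

lemma adj_B' {v : Vtx m r} (h : v ≠ B) : (Gr m r).Adj v B :=
  (adj_B h).symm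

lemma Gr_connected : (Gr m r).Connected := by
  rw [SimpleGraph.connected_iff]
  have reach : ∀ u : Vtx m r, (Gr m r).Reachable u B := by
    intro u
    by_cases h : u = B
    · exact h ▸ SimpleGraph.Reachable.refl _
    · exact (adj_B' h).reachable
  exact ⟨fun u v => (reach u).trans (reach v).symm, ⟨B⟩⟩

lemma dist2' {u z : Vtx m r} (hu : u ≠ B) (hz : z ≠ B) (hne : u ≠ z)
    (hna : ¬ (Gr m r).Adj u z) : (Gr m r).dist u z = 2 :=
  dist_two hne hna (adj_B' hu) (adj_B hz)

lemma eqdist (i : Fin m) (z : Vtx m r) (h1 : z ≠ X i) (h2 : z ≠ Y i)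
    (h3 : z ≠ T i) (h4 : z ≠ S i) :
    (Gr m r).dist (X i) z = (Gr m r).dist (Y i) z := by
  have hXB : (X i : Vtx m r) ≠ B := by simp
  have hYB : (Y i : Vtx m r) ≠ B := by simp
  cases z with
  | B =>
    rw [SimpleGraph.dist_eq_one_iff_adj.mpr (adj_B' hXB),
        SimpleGraph.dist_eq_one_iff_adj.mpr (adj_B' hYB)]
  | A =>
    rw [dist2' hXB (by simp) (by simp) (by rintro ⟨-, h⟩; simp [E] at h),
        dist2' hYB (by simp) (by simp) (by rintro ⟨-, h⟩; simp [E] at h)]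
  | C =>
    rw [dist2' hXB (by simp) (by simp) (by rintro ⟨-, h⟩; simp [E] at h),
        dist2' hYB (by simp) (by simp) (by rintro ⟨-, h⟩; simp [E] at h)]
  | Bit j =>
    by_cases hb : (i : ℕ).testBit (j : ℕ) = true
    · rw [SimpleGraph.dist_eq_one_iff_adj.mpr
            (adj_mk (u := X i) (v := Bit j) (by simp) (by right; right; right; exact hb)),
          SimpleGraph.dist_eq_one_iff_adj.mpr
            (adj_mk (u := Y i) (v := Bit j) (by simp) (by right; right; right; exact hb))]
    · rw [dist2' hXB (by simp) (by simp) (by rintro ⟨-, h⟩; simp [E, hb] at h),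
          dist2' hYB (by simp) (by simp) (by rintro ⟨-, h⟩; simp [E, hb] at h)]
  | X j =>
    have hj : j ≠ i := by rintro rfl; exact h1 rfl
    rw [dist2' hXB (by simp) (by simp [Ne.symm hj]) (by rintro ⟨-, h⟩; simp [E] at h),
        dist2' hYB (by simp) (by simp) (by rintro ⟨-, h⟩; simp [E] at h)]
  | Y j =>
    have hj : j ≠ i := by rintro rfl; exact h2 rfl
    rw [dist2' hXB (by simp) (by simp) (by rintro ⟨-, h⟩; simp [E] at h),
        dist2' hYB (by simp) (by simp [Ne.symm hj]) (by rintro ⟨-, h⟩; simp [E] at h)]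
  | T j =>
    have hj : j ≠ i := by rintro rfl; exact h3 rfl
    rw [dist2' hXB (by simp) (by simp) (by rintro ⟨-, h⟩; simp [E, hj.symm] at h),
        dist2' hYB (by simp) (by simp) (by rintro ⟨-, h⟩; simp [E] at h)]
  | S j =>
    have hj : j ≠ i := by rintro rfl; exact h4 rfl
    rw [dist2' hXB (by simp) (by simp) (by rintro ⟨-, h⟩; simp [E] at h),
        dist2' hYB (by simp) (by simp) (by rintro ⟨-, h⟩; simp [E, hj.symm] at h)]

lemma card_lower (k : ℕ) (R : Finset (Vtx m r)) (hres : IsKResSet (Gr m r) k R) :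
    m ≤ R.card := by
  have key : ∀ i : Fin m, ∃ z, z ∈ R ∧ (z = X i ∨ z = Y i ∨ z = T i ∨ z = S i) := by
    intro i
    obtain ⟨z, hzR, hzd⟩ := hres (X i) (Y i) (by simp)
    refine ⟨z, hzR, ?_⟩
    by_contra hcon
    push_neg at hcon
    obtain ⟨c1, c2, c3, c4⟩ := hcon
    exact hzd (by rw [eqdist i z c1 c2 c3 c4])
  choose f hfR hfP using key
  have hinj : Function.Injective f := by
    intro i j hij
    have hi := hfP i
    have hj := hfP j
    rw [hij] at hi
    rcases hi with h|h|h|h <;> rcases hj with h'|h'|h'|h' <;> simp_all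
  have : (Finset.univ : Finset (Fin m)).card ≤ R.card :=
    Finset.card_le_card_of_injOn f (fun i _ => hfR i) hinj.injOn
  simpa using this

lemma kld_lower (k : ℕ) : m ≤ kld (Gr m r) k := by
  have hne : {n : ℕ | ∃ S : Finset (Vtx m r),
      IsKDomSet (Gr m r) k S ∧ IsKResSet (Gr m r) k S ∧ S.card = n}.Nonempty :=
    ⟨_, Finset.univ, (univ_mem_kldSet Gr_connected k).1, (univ_mem_kldSet Gr_connected k).2, rfl⟩
  obtain ⟨S, hd, hres, hc⟩ := Nat.sInf_mem hne
  unfold kld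
  rw [← hc]
  exact card_lower k S hres

/-! ### The graph with the edge `AB` deleted -/

def G' (m r : ℕ) : SimpleGraph (Vtx m r) := (Gr m r).deleteEdges {s(A, B)}

lemma adj'_of {u v : Vtx m r} (h : (Gr m r).Adj u v) (h1 : ¬(u = A ∧ v = B))
    (h2 : ¬(u = B ∧ v = A)) : (G' m r).Adj u v := by
  rw [G', SimpleGraph.deleteEdges_adj]
  refine ⟨h, ?_⟩
  simp only [Set.mem_singleton_iff, Sym2.eq_iff]
  tauto

lemma not_adj' {u v : Vtx m r} (h : ¬ (Gr m r).Adj u v) : ¬ (G' m r).Adj u v := by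
  rw [G', SimpleGraph.deleteEdges_adj]
  tauto

lemma adj'_B {v : Vtx m r} (hA : v ≠ A) (hB : v ≠ B) : (G' m r).Adj v B :=
  adj'_of (adj_B' hB) (by simp [hA]) (by simp [hB])

lemma G'_connected : (G' m r).Connected := by
  rw [SimpleGraph.connected_iff]
  have reach : ∀ u : Vtx m r, (G' m r).Reachable u B := by
    intro u
    by_cases h : u = B
    · exact h ▸ SimpleGraph.Reachable.refl _
    by_cases hA : u = A
    · subst hA
      have h1 : (G' m r).Adj A C :=
        adj'_of (adj_mk (by simp) (by right; right; left; trivial)) (by simp) (by simp)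
      have h2 : (G' m r).Adj C B := adj'_B (by simp) (by simp)
      exact h1.reachable.trans h2.reachable
    · exact (adj'_B hA h).reachable
  exact ⟨fun u v => (reach u).trans (reach v).symm, ⟨B⟩⟩

/-! ### Distances in `G'` -/

lemma adj'_TA (i : Fin m) : (G' m r).Adj (T i) A :=
  adj'_of (adj_mk (u := A) (v := T i) (by simp) (by right; right; left; trivial)).symm
    (by simp) (by simp)

lemma adj'_CA : (G' m r).Adj C A :=
  adj'_of (adj_mk (u := A) (v := C) (by simp) (by right; right; left; trivial)).symm
    (by simp) (by simp)

lemma adj'_SC (i : Fin m) : (G' m r).Adj (S i) C :=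
  adj'_of (adj_mk (u := C) (v := S i) (by simp) (by right; right; left; trivial)).symm
    (by simp) (by simp)

lemma adj'_XT (i : Fin m) : (G' m r).Adj (X i) (T i) :=
  adj'_of (adj_mk (by simp) (by right; right; left; rfl)) (by simp) (by simp)

lemma adj'_YS (i : Fin m) : (G' m r).Adj (Y i) (S i) :=
  adj'_of (adj_mk (by simp) (by right; right; left; rfl)) (by simp) (by simp)

lemma dT_A (i : Fin m) : (G' m r).dist (T i) A = 1 :=
  SimpleGraph.dist_eq_one_iff_adj.mpr (adj'_TA i)

lemma dX_A (i : Fin m) : (G' m r).dist (X i) A = 2 :=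
  dist_two (by simp) (not_adj' (by rintro ⟨-, h⟩; simp [E] at h)) (adj'_XT i) (adj'_TA i)

lemma dS_A (i : Fin m) : (G' m r).dist (S i) A = 2 :=
  dist_two (by simp) (not_adj' (by rintro ⟨-, h⟩; simp [E] at h)) (adj'_SC i) adj'_CA

lemma dY_A (i : Fin m) : (G' m r).dist (Y i) A = 3 := by
  refine dist_three (by simp) (not_adj' (by rintro ⟨-, h⟩; simp [E] at h)) ?_
    (SimpleGraph.Walk.cons (adj'_YS i) (SimpleGraph.Walk.cons (adj'_SC i)
      (SimpleGraph.Walk.cons adj'_CA SimpleGraph.Walk.nil))) (by simp)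
  rintro w ⟨hw1, hw2⟩
  rw [G', SimpleGraph.deleteEdges_adj] at hw1 hw2
  obtain ⟨⟨hne1, hE1⟩, hdel1⟩ := hw1
  obtain ⟨⟨hne2, hE2⟩, hdel2⟩ := hw2
  cases w with
  | A => exact hne2 rfl
  | B => exact hdel2 (by rw [Sym2.eq_swap]; rfl)
  | C => simp [E] at hE1
  | Bit j => simp [E] at hE2
  | X j => simp [E] at hE2
  | Y j => simp [E] at hE2
  | T j => simp [E] at hE1
  | S j => simp [E] at hE2

lemma dX_C (i : Fin m) : (G' m r).dist (X i) C = 2 :=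
  dist_two (by simp) (not_adj' (by rintro ⟨-, h⟩; simp [E] at h))
    (adj'_B (by simp) (by simp)) ((adj'_B (by simp) (by simp)).symm)

lemma dS_C (i : Fin m) : (G' m r).dist (S i) C = 1 :=
  SimpleGraph.dist_eq_one_iff_adj.mpr (adj'_SC i)

lemma d_bit {i : Fin m} {t : Fin r} {u : Vtx m r}
    (hu : u = X i ∨ u = Y i ∨ u = T i ∨ u = S i) :
    (G' m r).dist u (Bit t) = if (i : ℕ).testBit (t : ℕ) = true then 1 else 2 := by
  rcases hu with rfl | rfl | rfl | rfl <;>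
  · split_ifs with hb
    · exact SimpleGraph.dist_eq_one_iff_adj.mpr
        (adj'_of (adj_mk (by simp) (by right; right; right; exact hb)) (by simp) (by simp))
    · exact dist_two (by simp) (not_adj' (by rintro ⟨-, h⟩; simp [E, hb] at h))
        (adj'_B (by simp) (by simp)) ((adj'_B (by simp) (by simp)).symm)

/-! ### The locating–dominating set of `G'` -/

def Sfin (m r : ℕ) : Finset (Vtx m r) :=
  {A, B, C} ∪ Finset.univ.image Bit

lemma gadget_form {u : Vtx m r} (hu : u ∉ Sfin m r) :
    ∃ i, u = X i ∨ u = Y i ∨ u = T i ∨ u = S i := by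
  cases u with
  | A => exact absurd (by simp [Sfin]) hu
  | B => exact absurd (by simp [Sfin]) hu
  | C => exact absurd (by simp [Sfin]) hu
  | Bit j => exact absurd (by simp [Sfin]) hu
  | X i => exact ⟨i, Or.inl rfl⟩
  | Y i => exact ⟨i, Or.inr (Or.inl rfl)⟩
  | T i => exact ⟨i, Or.inr (Or.inr (Or.inl rfl))⟩
  | S i => exact ⟨i, Or.inr (Or.inr (Or.inr rfl))⟩

lemma card_Sfin : (Sfin m r).card = 3 + r := by
  rw [Sfin, Finset.card_union_of_disjoint]
  · rw [Finset.card_image_of_injective _ (fun a b h => by simpa using h)]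
    rw [Finset.card_insert_of_notMem (by simp), Finset.card_insert_of_notMem (by simp),
      Finset.card_singleton, Finset.card_univ, Fintype.card_fin]
  · rw [Finset.disjoint_left]
    intro u hu hu2
    simp only [Finset.mem_insert, Finset.mem_singleton] at hu
    rcases hu with rfl | rfl | rfl <;> simp at hu2

lemma dom' (k : ℕ) (hk : 2 ≤ k) : IsKDomSet (G' m r) k (Sfin m r) := by
  intro u hu
  obtain ⟨i, hi⟩ := gadget_form hu
  refine ⟨B, by simp [Sfin], ?_⟩
  rcases hi with rfl | rfl | rfl | rfl <;>
  · rw [SimpleGraph.dist_eq_one_iff_adj.mpr (adj'_B (by simp) (by simp))]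
    omega

lemma bitdiff (hm : m ≤ 2 ^ r) {i j : Fin m} (hij : i ≠ j) :
    ∃ t : Fin r, (i : ℕ).testBit (t : ℕ) ≠ (j : ℕ).testBit (t : ℕ) := by
  have hne : (i : ℕ) ≠ (j : ℕ) := fun h => hij (Fin.ext h)
  by_contra hcon
  push_neg at hcon
  apply hne
  apply Nat.eq_of_testBit_eq
  intro t
  by_cases ht : t < r
  · exact hcon ⟨t, ht⟩
  · have h1 : (i : ℕ) < 2 ^ t :=
      lt_of_lt_of_le (lt_of_lt_of_le i.isLt hm) (Nat.pow_le_pow_right (by norm_num) (le_of_not_gt ht))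
    have h2 : (j : ℕ) < 2 ^ t :=
      lt_of_lt_of_le (lt_of_lt_of_le j.isLt hm) (Nat.pow_le_pow_right (by norm_num) (le_of_not_gt ht))
    rw [Nat.testBit_eq_false_of_lt h1, Nat.testBit_eq_false_of_lt h2]

lemma res' (k : ℕ) (hk : 2 ≤ k) (hm : m ≤ 2 ^ r) : IsKResSet (G' m r) k (Sfin m r) := by
  intro x y hxy
  have hkk : 3 ≤ k + 1 := by omega
  by_cases hx : x ∈ Sfin m r
  · refine ⟨x, hx, ?_⟩
    have h0 : (G' m r).dist y x ≠ 0 := (G'_connected.pos_dist_of_ne (Ne.symm hxy)).ne'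
    rw [SimpleGraph.dist_self]
    omega
  by_cases hy : y ∈ Sfin m r
  · refine ⟨y, hy, ?_⟩
    have h0 : (G' m r).dist x y ≠ 0 := (G'_connected.pos_dist_of_ne hxy).ne'
    rw [SimpleGraph.dist_self]
    omega
  obtain ⟨i, hi⟩ := gadget_form hx
  obtain ⟨j, hj⟩ := gadget_form hy
  by_cases hij : i = j
  · subst hij
    have hA : (A : Vtx m r) ∈ Sfin m r := by simp [Sfin]
    have hC : (C : Vtx m r) ∈ Sfin m r := by simp [Sfin]
    rcases hi with rfl | rfl | rfl | rfl <;> rcases hj with rfl | rfl | rfl | rfl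
    · exact absurd rfl hxy
    · exact ⟨A, hA, by rw [dX_A, dY_A]; omega⟩
    · exact ⟨A, hA, by rw [dX_A, dT_A]; omega⟩
    · exact ⟨C, hC, by rw [dX_C, dS_C]; omega⟩
    · exact ⟨A, hA, by rw [dY_A, dX_A]; omega⟩
    · exact absurd rfl hxy
    · exact ⟨A, hA, by rw [dY_A, dT_A]; omega⟩
    · exact ⟨A, hA, by rw [dY_A, dS_A]; omega⟩
    · exact ⟨A, hA, by rw [dT_A, dX_A]; omega⟩
    · exact ⟨A, hA, by rw [dT_A, dY_A]; omega⟩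
    · exact absurd rfl hxy
    · exact ⟨A, hA, by rw [dT_A, dS_A]; omega⟩
    · exact ⟨C, hC, by rw [dS_C, dX_C]; omega⟩
    · exact ⟨A, hA, by rw [dS_A, dY_A]; omega⟩
    · exact ⟨A, hA, by rw [dS_A, dT_A]; omega⟩
    · exact absurd rfl hxy
  · obtain ⟨t, ht⟩ := bitdiff hm hij
    have hBit : (Bit t : Vtx m r) ∈ Sfin m r := by simp [Sfin]
    refine ⟨Bit t, hBit, ?_⟩
    rw [d_bit hi, d_bit hj]
    rcases Bool.eq_false_or_eq_true ((i : ℕ).testBit (t : ℕ)) with h1 | h1 <;>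
        rcases Bool.eq_false_or_eq_true ((j : ℕ).testBit (t : ℕ)) with h2 | h2 <;>
      simp [h1, h2] at ht ⊢ <;> omega

lemma kld_upper (k : ℕ) (hk : 2 ≤ k) (hm : m ≤ 2 ^ r) : kld (G' m r) k ≤ 3 + r :=
  Nat.sInf_le ⟨Sfin m r, dom' k hk, res' k hk hm, card_Sfin⟩

end Stmt19

/-- For every integer `k ≥ 2` and positive integer `N`, there exist a finite simple
connected graph `G` and an edge `e` of `G` with `G - e` connected and
`γ_L^k(G) - γ_L^k(G - e) ≥ N`. -/
theorem stmt_19 (k : ℕ) (hk : 2 ≤ k) (N : ℕ) (hN : 1 ≤ N) :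
    ∃ (n : ℕ) (G : SimpleGraph (Fin n)) (e : Sym2 (Fin n)),
      G.Connected ∧ e ∈ G.edgeSet ∧ (G.deleteEdges {e}).Connected ∧
      kld (G.deleteEdges {e}) k + N ≤ kld G k := by
  classical
  set r : ℕ := N + 3 with hr
  set m : ℕ := 2 ^ r with hmdef
  let φ : Stmt19.Vtx m r ≃ Fin (Fintype.card (Stmt19.Vtx m r)) := Fintype.equivFin (Stmt19.Vtx m r)
  set Gfin : SimpleGraph (Fin (Fintype.card (Stmt19.Vtx m r))) :=
    (Stmt19.Gr m r).comap φ.symm.toEmbedding with hGfin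
  have ψ : Gfin ≃g Stmt19.Gr m r := SimpleGraph.Iso.comap φ.symm (Stmt19.Gr m r)
  have hGfinConn : Gfin.Connected := Stmt19.iso_connected ψ.symm Stmt19.Gr_connected
  have hdel : Gfin.deleteEdges {s(φ Stmt19.Vtx.A, φ Stmt19.Vtx.B)} = (Stmt19.G' m r).comap φ.symm.toEmbedding := by
    ext u v
    simp only [hGfin, SimpleGraph.deleteEdges_adj, SimpleGraph.comap_adj,
      Equiv.coe_toEmbedding, Stmt19.G', Set.mem_singleton_iff, Sym2.eq_iff, Equiv.symm_apply_eq]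
  refine ⟨Fintype.card (Stmt19.Vtx m r), Gfin, s(φ Stmt19.Vtx.A, φ Stmt19.Vtx.B), hGfinConn, ?_, ?_, ?_⟩
  · rw [SimpleGraph.mem_edgeSet]
    show (Stmt19.Gr m r).Adj (φ.symm (φ Stmt19.Vtx.A)) (φ.symm (φ Stmt19.Vtx.B))
    simp only [Equiv.symm_apply_apply]
    exact Stmt19.adj_B' (by simp)
  · rw [hdel]
    exact Stmt19.iso_connected (SimpleGraph.Iso.comap φ.symm (Stmt19.G' m r)).symm Stmt19.G'_connected
  · rw [hdel]
    have h1 : kld ((Stmt19.G' m r).comap φ.symm.toEmbedding) k ≤ kld (Stmt19.G' m r) k :=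
      Stmt19.kld_le_of_iso (SimpleGraph.Iso.comap φ.symm (Stmt19.G' m r)).symm k
        ⟨_, Finset.univ, (Stmt19.univ_mem_kldSet Stmt19.G'_connected k).1,
          (Stmt19.univ_mem_kldSet Stmt19.G'_connected k).2, rfl⟩
    have h2 : kld (Stmt19.Gr m r) k ≤ kld Gfin k :=
      Stmt19.kld_le_of_iso (SimpleGraph.Iso.comap φ.symm (Stmt19.Gr m r)) k
        ⟨_, Finset.univ, (Stmt19.univ_mem_kldSet hGfinConn k).1,
          (Stmt19.univ_mem_kldSet hGfinConn k).2, rfl⟩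
    have h3 : kld (Stmt19.G' m r) k ≤ 3 + r := Stmt19.kld_upper k hk (le_of_eq hmdef)
    have h4 : m ≤ kld (Stmt19.Gr m r) k := Stmt19.kld_lower k
    have h5 : 3 + r + N ≤ m := by
      have hlt : N < 2 ^ N := Nat.lt_two_pow_self
      have hp : m = 8 * 2 ^ N := by rw [hmdef, hr]; ring
      have hrr : r = N + 3 := hr
      omega
    omega
end
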